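/- If there exists a [δ]^{<θ}-normal ideal on P_κ(λ), then the smallest [δ]^{<θ}-normal ideal on P_κ(λ) is ∇^{[δ]^{<θ̄·3}} I_{κ,λ} (where θ̄·3 denotes the cardinal product). -/

import Mathlib

open Cardinal Set

namespace PklNormal

/-- `P_κ(l)`: the collection of subsets of (the set of ordinals below) `l`
of cardinality `< κ`. -/
def PSet (κ : Cardinal.{0}) (l : Ordinal.{0}) : Set (Set Ordinal.{0}) :=
  {a | a ⊆ Set.Iio l ∧ #↥a < Cardinal.lift.{1} κ}

/-- `e ∈ P_{|a ∩ σ|}(a ∩ γ)`. -/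
def inP (σ : Cardinal.{0}) (γ : Ordinal.{0}) (a e : Set Ordinal.{0}) : Prop :=
  e ⊆ a ∩ Set.Iio γ ∧ #↥e < #↥(a ∩ Set.Iio σ.ord)

/-- The collection `I_{κ,l}` of non-cofinal subsets of `P_κ(l)`. -/
def Ikl (κ : Cardinal.{0}) (l : Ordinal.{0}) : Set (Set (Set Ordinal.{0})) :=
  {B | B ⊆ PSet κ l ∧ ∃ a ∈ PSet κ l, ∀ b ∈ B, ¬ a ⊆ b}

/-- An ideal on `P_κ(l)`. -/
structure IsIdeal (κ : Cardinal.{0}) (l : Ordinal.{0})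
    (K : Set (Set (Set Ordinal.{0}))) : Prop where
  mem_subset : ∀ B ∈ K, B ⊆ PSet κ l
  subset_mem : ∀ B ∈ K, ∀ C ⊆ B, C ∈ K
  sUnion_mem : ∀ Y ⊆ K, Y.Nonempty → #↥Y < Cardinal.lift.{1} κ → ⋃₀ Y ∈ K
  nonCofinal_subset : Ikl κ l ⊆ K
  univ_not_mem : PSet κ l ∉ K

/-- `K⁺`: the subsets of `P_κ(l)` not in `K`. -/
def plus (κ : Cardinal.{0}) (l : Ordinal.{0}) (K : Set (Set (Set Ordinal.{0}))) :
    Set (Set (Set Ordinal.{0})) :=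
  {B | B ⊆ PSet κ l ∧ B ∉ K}

/-- `K*`: the subsets of `P_κ(l)` whose complement is in `K`. -/
def star (κ : Cardinal.{0}) (l : Ordinal.{0}) (K : Set (Set (Set Ordinal.{0}))) :
    Set (Set (Set Ordinal.{0})) :=
  {B | B ⊆ PSet κ l ∧ PSet κ l \ B ∈ K}

/-- `K|A`. -/
def restrict (κ : Cardinal.{0}) (l : Ordinal.{0}) (K : Set (Set (Set Ordinal.{0})))
    (A : Set (Set Ordinal.{0})) : Set (Set (Set Ordinal.{0})) :=
  {B | B ⊆ PSet κ l ∧ B ∩ A ∈ K}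

/-- `∇^{[γ]^{<σ}} J`. -/
def nabla (κ : Cardinal.{0}) (l : Ordinal.{0}) (σ : Cardinal.{0}) (γ : Ordinal.{0})
    (J : Set (Set (Set Ordinal.{0}))) : Set (Set (Set Ordinal.{0})) :=
  {B | ∃ F : Set Ordinal.{0} → Set (Set Ordinal.{0}),
    (∀ e ∈ PSet σ γ, F e ∈ J) ∧
    B ⊆ {a | a ∈ PSet κ l ∧ a ∩ Set.Iio σ.ord = ∅} ∪
      ⋃ e ∈ PSet σ γ, {a | a ∈ F e ∧ inP σ γ a e}}

/-- `J` is `[γ]^{<σ}`-normal. -/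
def IsNormal (κ : Cardinal.{0}) (l : Ordinal.{0}) (σ : Cardinal.{0}) (γ : Ordinal.{0})
    (J : Set (Set (Set Ordinal.{0}))) : Prop :=
  J = nabla κ l σ γ J

def IsNormalIdeal (κ : Cardinal.{0}) (l : Ordinal.{0}) (σ : Cardinal.{0}) (γ : Ordinal.{0})
    (J : Set (Set (Set Ordinal.{0}))) : Prop :=
  IsIdeal κ l J ∧ IsNormal κ l σ γ J

/-- `N` is the smallest `[γ]^{<σ}`-normal ideal on `P_κ(l)`. -/
def IsLeastNormalIdeal (κ : Cardinal.{0}) (l : Ordinal.{0}) (σ : Cardinal.{0}) (γ : Ordinal.{0})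
    (N : Set (Set (Set Ordinal.{0}))) : Prop :=
  IsNormalIdeal κ l σ γ N ∧ ∀ J, IsNormalIdeal κ l σ γ J → N ⊆ J

/-- `∇^δ K`, the ordinal-indexed diagonal union. -/
def nablaOrd (κ : Cardinal.{0}) (l : Ordinal.{0}) (δ : Ordinal.{0})
    (K : Set (Set (Set Ordinal.{0}))) : Set (Set (Set Ordinal.{0})) :=
  {B | ∃ F : Ordinal.{0} → Set (Set Ordinal.{0}),
    (∀ α < δ, F α ∈ K) ∧
    B ⊆ {a | a ∈ PSet κ l ∧ (0 : Ordinal) ∉ a} ∪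
      ⋃ α ∈ Set.Iio δ, {a | a ∈ F α ∧ α ∈ a}}

/-- `J` is `δ`-normal. -/
def IsOrdNormal (κ : Cardinal.{0}) (l : Ordinal.{0}) (δ : Ordinal.{0})
    (J : Set (Set (Set Ordinal.{0}))) : Prop :=
  J = nablaOrd κ l δ J

/-- `θ̄`: equals `θ` if `θ < κ`, or if `θ = κ` and `κ` is a limit cardinal;
equals `ν` if `θ = κ = ν⁺`. -/
noncomputable def thetaBar (κ θ : Cardinal.{0}) : Cardinal.{0} :=
  haveI := Classical.propDecidable (θ < κ ∨ Order.IsSuccLimit κ)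
  if θ < κ ∨ Order.IsSuccLimit κ then θ else sSup {ν | Order.succ ν = κ}

/-- `cof(K)`: the least number of generators of `K`. -/
noncomputable def cofIdeal (K : Set (Set (Set Ordinal.{0}))) : Cardinal.{1} :=
  sInf {c | ∃ S ⊆ K, #↥S = c ∧ ∀ B ∈ K, ∃ C ∈ S, B ⊆ C}

/-- The dominating number `𝔡^μ_{κ,l}`. -/
noncomputable def dNum (κ : Cardinal.{0}) (l : Ordinal.{0}) (μ : Cardinal.{1}) : Cardinal.{1} :=
  sInf {c | ∃ F : Set (μ.ord.ToType → Set Ordinal.{0}),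
    #↥F = c ∧ (∀ f ∈ F, ∀ i, f i ∈ PSet κ l) ∧
    ∀ g : μ.ord.ToType → Set Ordinal.{0}, (∀ i, g i ∈ PSet κ l) →
      ∃ f ∈ F, ∀ i, g i ⊆ f i}

/-- `u(ρ,μ)`: the least cardinality of a cofinal subset of `(P_ρ(μ), ⊆)`. -/
noncomputable def uNum (ρ μ : Cardinal.{0}) : Cardinal.{1} :=
  sInf {c | ∃ X ⊆ PSet ρ μ.ord, #↥X = c ∧ ∀ e ∈ PSet ρ μ.ord, ∃ x ∈ X, e ⊆ x}

/-- `cov(lam, ν, ν, 2)`: the least cardinality of an `X ⊆ P_ν(lam)` such that every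
member of `P_ν(lam)` is contained in a member of `X`. -/
noncomputable def covNum (lam ν : Cardinal.{0}) : Cardinal.{1} :=
  sInf {c | ∃ X ⊆ PSet ν lam.ord, #↥X = c ∧ ∀ e ∈ PSet ν lam.ord, ∃ x ∈ X, e ⊆ x}

/-- `C` is closed unbounded in `l`. -/
def IsClubIn (C : Set Ordinal.{0}) (l : Ordinal.{0}) : Prop :=
  C ⊆ Set.Iio l ∧ (∀ p < l, ∃ q ∈ C, p < q) ∧
    (∀ o < l, Order.IsSuccLimit o → (∀ p < o, ∃ q ∈ C, p < q ∧ q < o) → o ∈ C)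

/-- `κ` is a Mahlo cardinal: the set of regular cardinals below `κ` is stationary in `κ`. -/
def IsMahlo (κ : Cardinal.{0}) : Prop :=
  ∀ C : Set Ordinal.{0}, IsClubIn C κ.ord →
    ∃ o ∈ C, ∃ ρ : Cardinal.{0}, ρ.IsRegular ∧ ρ.ord = o

/-! ### Auxiliary development -/

section Aux

open Cardinal Set Order

/-- The cardinality of `a ∩ σ`. -/
noncomputable def mSet (σ : Cardinal.{0}) (a : Set Ordinal.{0}) : Cardinal.{1} :=
  #↥(a ∩ Set.Iio σ.ord)

/-- The "club" associated to a witness function `w`. -/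
def Cw (κ : Cardinal.{0}) (l : Ordinal.{0}) (σ : Cardinal.{0}) (δ : Ordinal.{0})
    (w : Set Ordinal.{0} → Set Ordinal.{0}) : Set (Set Ordinal.{0}) :=
  {a | a ∈ PSet κ l ∧ (a ∩ Set.Iio σ.ord).Nonempty ∧
    ∀ c : Set Ordinal.{0}, c ⊆ a ∩ Set.Iio δ → #↥c < mSet σ a → w c ⊆ a}

variable {κ lam σ σ₁ σ₂ : Cardinal.{0}} {l δ : Ordinal.{0}}

theorem mk_Iio_ord (σ : Cardinal.{0}) : #↥(Set.Iio σ.ord) = Cardinal.lift.{1} σ := by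
  rw [Ordinal.mk_Iio_ordinal, Cardinal.card_ord]

theorem mSet_le_lift (σ : Cardinal.{0}) (a : Set Ordinal.{0}) :
    mSet σ a ≤ Cardinal.lift.{1} σ := by
  rw [← mk_Iio_ord σ]
  exact Cardinal.mk_le_mk_of_subset inter_subset_right

theorem mSet_mono (h : σ₁ ≤ σ₂) (a : Set Ordinal.{0}) : mSet σ₁ a ≤ mSet σ₂ a :=
  Cardinal.mk_le_mk_of_subset (inter_subset_inter_right _ (Iio_subset_Iio (Cardinal.ord_le_ord.2 h)))

theorem mSet_le_mk (σ : Cardinal.{0}) (a : Set Ordinal.{0}) : mSet σ a ≤ #↥a :=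
  Cardinal.mk_le_mk_of_subset inter_subset_left

theorem mSet_pos {a : Set Ordinal.{0}} (h : (a ∩ Set.Iio σ.ord).Nonempty) : 0 < mSet σ a := by
  rw [pos_iff_ne_zero, Ne, mSet, Cardinal.mk_emptyCollection_iff]
  exact h.ne_empty

theorem isRegular_lift (h : κ.IsRegular) : (Cardinal.lift.{1} κ).IsRegular := by
  constructor
  · rw [← Cardinal.lift_aleph0.{1,0}]
    exact Cardinal.lift_le.2 h.1
  · rw [← Cardinal.lift_ord, ← Ordinal.lift_cof]
    exact Cardinal.lift_le.2 h.2

theorem aleph0_le_lift_kappa (h : κ.IsRegular) : ℵ₀ ≤ Cardinal.lift.{1} κ :=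
  (isRegular_lift h).1

/-- `∅ ∈ P_κ(l)`. -/
theorem empty_mem_PSet (h : 0 < κ) : (∅ : Set Ordinal.{0}) ∈ PSet κ l := by
  refine ⟨empty_subset _, ?_⟩
  rw [Cardinal.mk_emptyCollection]
  have : Cardinal.lift.{1,0} 0 < Cardinal.lift.{1,0} κ := Cardinal.lift_lt.2 h
  simpa using this

theorem mem_PSet_of_subset {a b : Set Ordinal.{0}} (hb : b ∈ PSet κ l) (h : a ⊆ b) :
    a ∈ PSet κ l :=
  ⟨h.trans hb.1, lt_of_le_of_lt (Cardinal.mk_le_mk_of_subset h) hb.2⟩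

theorem union_mem_PSet (hκ : κ.IsRegular) {a b : Set Ordinal.{0}}
    (ha : a ∈ PSet κ l) (hb : b ∈ PSet κ l) : a ∪ b ∈ PSet κ l := by
  refine ⟨union_subset ha.1 hb.1, lt_of_le_of_lt (Cardinal.mk_union_le a b) ?_⟩
  exact Cardinal.add_lt_of_lt (aleph0_le_lift_kappa hκ) ha.2 hb.2

theorem biUnion_mem_PSet (hκ : κ.IsRegular) {ι : Type 1} {s : Set ι}
    (hs : #↥s < Cardinal.lift.{1} κ) {f : ι → Set Ordinal.{0}}
    (hf : ∀ i ∈ s, f i ∈ PSet κ l) : (⋃ i ∈ s, f i) ∈ PSet κ l := by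
  constructor
  · exact iUnion₂_subset fun i hi => (hf i hi).1
  · refine lt_of_le_of_lt (Cardinal.mk_biUnion_le f s) ?_
    exact Cardinal.mul_lt_of_lt (aleph0_le_lift_kappa hκ) hs
      (Cardinal.iSup_lt_of_isRegular (isRegular_lift hκ) hs fun i => (hf i i.2).2)

theorem singleton_zero_mem_PSet (hκ : κ.IsRegular) (hl : 0 < l) :
    ({0} : Set Ordinal.{0}) ∈ PSet κ l := by
  refine ⟨by simpa using hl, ?_⟩
  rw [Cardinal.mk_singleton]
  exact lt_of_lt_of_le Cardinal.one_lt_aleph0 (aleph0_le_lift_kappa hκ)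

theorem singleton_mem_PSet (hκ : κ.IsRegular) {x : Ordinal.{0}} (hx : x < l) :
    ({x} : Set Ordinal.{0}) ∈ PSet κ l := by
  refine ⟨by simpa using hx, ?_⟩
  rw [Cardinal.mk_singleton]
  exact lt_of_lt_of_le Cardinal.one_lt_aleph0 (aleph0_le_lift_kappa hκ)

theorem empty_mem_Ikl (hκ : κ.IsRegular) : (∅ : Set (Set Ordinal.{0})) ∈ Ikl κ l :=
  ⟨empty_subset _, ∅, empty_mem_PSet hκ.pos, fun b hb => absurd hb (notMem_empty b)⟩

/-- Every member of `∇ J` is a subset of `P_κ(l)`, provided members of `J` are. -/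
theorem nabla_subset_PSet {J : Set (Set (Set Ordinal.{0}))}
    (hJ : ∀ B ∈ J, B ⊆ PSet κ l) {γ : Ordinal.{0}} {B : Set (Set Ordinal.{0})}
    (hB : B ∈ nabla κ l σ γ J) : B ⊆ PSet κ l := by
  obtain ⟨F, hF, hcov⟩ := hB
  intro a ha
  rcases hcov ha with h | h
  · exact h.1
  · simp only [mem_iUnion, exists_prop] at h
    obtain ⟨e, he, haF, -⟩ := h
    exact hJ (F e) (hF e he) haF

theorem Ikl_subset_PSet : ∀ B ∈ Ikl κ l, B ⊆ PSet κ l := fun _ hB => hB.1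

/-- `J ⊆ ∇ J` whenever members of `J` are subsets of `P_κ(l)` and `0 < σ`. -/
theorem subset_nabla {J : Set (Set (Set Ordinal.{0}))}
    (hJ : ∀ B ∈ J, B ⊆ PSet κ l) (hσ : 0 < σ) {γ : Ordinal.{0}} :
    J ⊆ nabla κ l σ γ J := by
  intro B hB
  refine ⟨fun _ => B, fun _ _ => hB, ?_⟩
  intro a ha
  by_cases hem : a ∩ Set.Iio σ.ord = ∅
  · exact Or.inl ⟨hJ B hB ha, hem⟩
  · right
    simp only [mem_iUnion, exists_prop]
    refine ⟨∅, empty_mem_PSet hσ, ha, empty_subset _, ?_⟩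
    rw [Cardinal.mk_emptyCollection]
    exact mSet_pos (nonempty_iff_ne_empty.2 hem)

theorem nabla_mono_right {J₁ J₂ : Set (Set (Set Ordinal.{0}))} (h : J₁ ⊆ J₂)
    {γ : Ordinal.{0}} : nabla κ l σ γ J₁ ⊆ nabla κ l σ γ J₂ := by
  rintro B ⟨F, hF, hcov⟩
  exact ⟨F, fun e he => h (hF e he), hcov⟩

/-- Characterization of membership in `∇^{[δ]^{<σ}} I_{κ,l}` via witness functions. -/
theorem mem_nabla_Ikl_iff (hκ : κ.IsRegular) {B : Set (Set Ordinal.{0})} :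
    B ∈ nabla κ l σ δ (Ikl κ l) ↔
      B ⊆ PSet κ l ∧ ∃ w : Set Ordinal.{0} → Set Ordinal.{0},
        (∀ c ∈ PSet σ δ, w c ∈ PSet κ l) ∧ B ∩ Cw κ l σ δ w = ∅ := by
  constructor
  · intro hB
    refine ⟨nabla_subset_PSet Ikl_subset_PSet hB, ?_⟩
    obtain ⟨F, hF, hcov⟩ := hB
    have hch : ∀ c : Set Ordinal.{0}, ∃ v : Set Ordinal.{0},
        c ∈ PSet σ δ → v ∈ PSet κ l ∧ ∀ b ∈ F c, ¬v ⊆ b := by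
      intro c
      by_cases hc : c ∈ PSet σ δ
      · obtain ⟨v, hv1, hv2⟩ := (hF c hc).2
        exact ⟨v, fun _ => ⟨hv1, hv2⟩⟩
      · exact ⟨∅, fun h => absurd h hc⟩
    refine ⟨fun c => (hch c).choose, fun c hc => ((hch c).choose_spec hc).1, ?_⟩
    rw [eq_empty_iff_forall_notMem]
    rintro a ⟨haB, haP, hane, hacl⟩
    rcases hcov haB with h | h
    · exact hane.ne_empty h.2
    · simp only [mem_iUnion, exists_prop] at h
      obtain ⟨e, he, haF, he1, he2⟩ := h
      exact ((hch e).choose_spec he).2 a haF (hacl e he1 he2)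
  · rintro ⟨hBP, w, hw, hdisj⟩
    refine ⟨fun c => {b | b ∈ PSet κ l ∧ ¬w c ⊆ b}, ?_, ?_⟩
    · intro c hc
      exact ⟨fun b hb => hb.1, w c, hw c hc, fun b hb => hb.2⟩
    · intro a haB
      have haP : a ∈ PSet κ l := hBP haB
      by_cases hem : a ∩ Set.Iio σ.ord = ∅
      · exact Or.inl ⟨haP, hem⟩
      · right
        have hane : (a ∩ Set.Iio σ.ord).Nonempty := nonempty_iff_ne_empty.2 hem
        have : a ∉ Cw κ l σ δ w := fun hmem =>
          (eq_empty_iff_forall_notMem.1 hdisj) a ⟨haB, hmem⟩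
        simp only [Cw, mem_setOf_eq, haP, hane, true_and, not_forall] at this
        obtain ⟨c, hc1, hc2, hc3⟩ := this
        simp only [mem_iUnion, exists_prop]
        refine ⟨c, ⟨(subset_inter_iff.1 hc1).2, lt_of_lt_of_le hc2 (mSet_le_lift σ a)⟩,
          ⟨haP, hc3⟩, hc1, hc2⟩

theorem IsIdeal.union_mem {J : Set (Set (Set Ordinal.{0}))} (hJ : IsIdeal κ l J)
    (hκ : κ.IsRegular) {A B : Set (Set Ordinal.{0})} (hA : A ∈ J) (hB : B ∈ J) :
    A ∪ B ∈ J := by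
  have hsub : ({A, B} : Set (Set (Set Ordinal.{0}))) ⊆ J := by
    rintro C (rfl | rfl) <;> assumption
  have hcard : #↥({A, B} : Set (Set (Set Ordinal.{0}))) < Cardinal.lift.{1} κ := by
    refine lt_of_le_of_lt ((Cardinal.mk_insert_le ..).trans ?_)
      (lt_of_lt_of_le (Cardinal.nat_lt_aleph0 2) (aleph0_le_lift_kappa hκ))
    rw [Cardinal.mk_singleton]
    norm_num
  have := hJ.sUnion_mem {A, B} hsub ⟨A, by simp⟩ hcard
  rwa [Set.sUnion_pair] at this

/-- The key arithmetic facts about `σ̄ = θ̄·3`. -/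
theorem thetaBar_facts {θ : Cardinal.{0}} (hκ : κ.IsRegular) (hθ2 : 2 ≤ θ) (hθκ : θ ≤ κ) :
    (3 : Cardinal) ≤ thetaBar κ θ * 3 ∧ thetaBar κ θ * 3 ≤ κ ∧
      (θ ≤ thetaBar κ θ * 3 ∨ (thetaBar κ θ * 3 < κ ∧ ℵ₀ ≤ thetaBar κ θ * 3 ∧
        Cardinal.lift.{1} κ = Order.succ (Cardinal.lift.{1} (thetaBar κ θ * 3)))) ∧
      (thetaBar κ θ * 3 ≤ θ ∨ ∃ n : ℕ, 2 ≤ n ∧ θ = (n : Cardinal) ∧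
        thetaBar κ θ * 3 = ((3 * n : ℕ) : Cardinal)) := by
  classical
  by_cases hcond : θ < κ ∨ Order.IsSuccLimit κ
  · have ht : thetaBar κ θ = θ := by
      rw [thetaBar]; exact dif_pos hcond
    rcases lt_or_ge θ ℵ₀ with hθfin | hθinf
    · obtain ⟨n, rfl⟩ := Cardinal.lt_aleph0.1 hθfin
      have hn2 : 2 ≤ n := by exact_mod_cast hθ2
      have hmul : thetaBar κ (n : Cardinal) * 3 = ((3 * n : ℕ) : Cardinal) := by
        rw [ht]; push_cast; ring
      refine ⟨?_, ?_, Or.inl ?_, Or.inr ⟨n, hn2, rfl, hmul⟩⟩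
      · rw [hmul]; exact_mod_cast Nat.le_mul_of_pos_right 3 (by omega)
      · rw [hmul]
        exact le_of_lt (lt_of_lt_of_le (Cardinal.nat_lt_aleph0 _) hκ.1)
      · rw [hmul]; exact_mod_cast Nat.le_mul_of_pos_left n (by omega)
    · have hmul : thetaBar κ θ * 3 = θ := by
        rw [ht]
        exact Cardinal.mul_eq_left hθinf
          (le_of_lt (lt_of_lt_of_le (Cardinal.nat_lt_aleph0 3) hθinf)) (by norm_num)
      rw [hmul]
      exact ⟨le_of_lt (lt_of_lt_of_le (Cardinal.nat_lt_aleph0 3) hθinf), hθκ,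
        Or.inl le_rfl, Or.inl le_rfl⟩
  · push_neg at hcond
    obtain ⟨hκθ, hnotlim⟩ := hcond
    have hθκ' : θ = κ := le_antisymm hθκ hκθ
    have hpre : ¬Order.IsSuccPrelimit κ := by
      rcases Order.not_isSuccLimit_iff.1 hnotlim with h | h
      · exfalso
        exact absurd (h (zero_le : (0 : Cardinal.{0}) ≤ κ)) (by simpa using (lt_of_lt_of_le Cardinal.aleph0_pos hκ.1).ne')
      · exact h
    obtain ⟨ν₀, -, hν₀⟩ := Order.not_isSuccPrelimit_iff_succ_eq.1 hpre
    have hset : {ν : Cardinal.{0} | Order.succ ν = κ} = {ν₀} := by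
      ext ν
      simp only [Set.mem_setOf_eq, Set.mem_singleton_iff]
      constructor
      · intro hν; exact Order.succ_injective (hν.trans hν₀.symm)
      · rintro rfl; exact hν₀
    have ht : thetaBar κ θ = ν₀ := by
      rw [thetaBar, if_neg (not_or.2 ⟨not_lt.2 hκθ, hnotlim⟩), hset, csSup_singleton]
    have hν₀inf : ℵ₀ ≤ ν₀ := by
      by_contra hfin
      push_neg at hfin
      have : κ ≤ ℵ₀ := hν₀ ▸ Order.succ_le_iff.2 hfin
      have hκa : κ = ℵ₀ := le_antisymm this hκ.1
      exact hnotlim (hκa ▸ Cardinal.isSuccLimit_aleph0)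
    have hmul : thetaBar κ θ * 3 = ν₀ := by
      rw [ht]
      exact Cardinal.mul_eq_left hν₀inf
        (le_of_lt (lt_of_lt_of_le (Cardinal.nat_lt_aleph0 3) hν₀inf)) (by norm_num)
    rw [hmul]
    have hν₀κ : ν₀ < κ := hν₀ ▸ Order.lt_succ ν₀
    refine ⟨le_of_lt (lt_of_lt_of_le (Cardinal.nat_lt_aleph0 3) hν₀inf), le_of_lt hν₀κ,
      Or.inr ⟨hν₀κ, hν₀inf, ?_⟩, Or.inl (hθκ'.symm ▸ le_of_lt hν₀κ)⟩
    rw [← hν₀, Cardinal.lift_succ]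

/-- Monotonicity of `∇` in the index `σ`, over an ideal. -/
theorem nabla_mono_sigma {J : Set (Set (Set Ordinal.{0}))} (hJ : IsIdeal κ l J)
    (hκ : κ.IsRegular) (hl : 0 < l) (h0 : 0 < σ₁) (h12 : σ₁ ≤ σ₂) :
    nabla κ l σ₁ δ J ⊆ nabla κ l σ₂ δ J := by
  have hD : {a | a ∈ PSet κ l ∧ a ∩ Set.Iio σ₁.ord = ∅} ∈ J := by
    refine hJ.nonCofinal_subset ⟨fun a ha => ha.1, {0}, singleton_zero_mem_PSet hκ hl, ?_⟩
    rintro b ⟨-, hb⟩ hsub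
    have h0' : (0 : Ordinal.{0}) < σ₁.ord := by
      simpa using Cardinal.ord_lt_ord.2 h0
    have h0b : (0 : Ordinal.{0}) ∈ b ∩ Set.Iio σ₁.ord := ⟨hsub rfl, by simpa using h0'⟩
    rw [hb] at h0b
    exact h0b
  rintro B ⟨F, hF, hcov⟩
  classical
  refine ⟨fun e => (if e ∈ PSet σ₁ δ then F e else ∅) ∪
    {a | a ∈ PSet κ l ∧ a ∩ Set.Iio σ₁.ord = ∅}, ?_, ?_⟩
  · intro e _
    refine hJ.union_mem hκ ?_ hD
    split
    · exact hF e ‹_›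
    · exact hJ.subset_mem _ hD _ (empty_subset _)
  · intro a ha
    rcases hcov ha with h | h
    · by_cases hem : a ∩ Set.Iio σ₂.ord = ∅
      · exact Or.inl ⟨h.1, hem⟩
      · right
        simp only [mem_iUnion, exists_prop]
        refine ⟨∅, empty_mem_PSet (lt_of_lt_of_le h0 h12), ?_, empty_subset _, ?_⟩
        · simp only [empty_mem_PSet, if_pos, mem_union]
          right; exact h
        · rw [Cardinal.mk_emptyCollection]
          exact mSet_pos (nonempty_iff_ne_empty.2 hem)
    · simp only [mem_iUnion, exists_prop] at h
      obtain ⟨e, he, haF, he1, he2⟩ := h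
      right
      simp only [mem_iUnion, exists_prop]
      refine ⟨e, ⟨he.1, lt_of_lt_of_le he.2 (Cardinal.lift_le.2 h12)⟩, ?_, he1,
        lt_of_lt_of_le he2 (mSet_mono h12 a)⟩
      rw [if_pos he]
      exact Or.inl haF

theorem Iio_natCast_mem_PSet (hκ : κ.IsRegular) (hl : Ordinal.omega0 ≤ l) (k : ℕ) :
    Set.Iio ((k : ℕ) : Ordinal.{0}) ∈ PSet κ l := by
  refine ⟨Iio_subset_Iio (le_trans (le_of_lt (Ordinal.nat_lt_omega0 k)) hl), ?_⟩
  rw [Ordinal.mk_Iio_ordinal, Ordinal.card_nat, Cardinal.lift_natCast]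
  exact lt_of_lt_of_le (Cardinal.nat_lt_aleph0 k) (aleph0_le_lift_kappa hκ)

theorem mk_inter_Iio_nat {k : ℕ} {a : Set Ordinal.{0}}
    (h : Set.Iio ((k : ℕ) : Ordinal.{0}) ⊆ a) :
    #↥(a ∩ Set.Iio (((k : ℕ) : Cardinal.{0})).ord) = ((k : ℕ) : Cardinal.{1}) := by
  have heq : a ∩ Set.Iio (((k : ℕ) : Cardinal.{0})).ord = Set.Iio ((k : ℕ) : Ordinal.{0}) := by
    rw [Cardinal.ord_nat]
    exact inter_eq_self_of_subset_right h
  rw [heq, Ordinal.mk_Iio_ordinal, Ordinal.card_nat, Cardinal.lift_natCast]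

theorem mSet_nat_of_subset {k : ℕ} {a : Set Ordinal.{0}}
    (h : Set.Iio ((k : ℕ) : Ordinal.{0}) ⊆ a) :
    mSet ((k : ℕ) : Cardinal.{0}) a = ((k : ℕ) : Cardinal.{1}) :=
  mk_inter_Iio_nat h

theorem mk_finset_coe (E : Finset Ordinal.{0}) :
    #↥(↑E : Set Ordinal.{0}) = (E.card : Cardinal.{1}) :=
  Cardinal.mk_coe_finset

theorem lemmaA_fin (hκ : κ.IsRegular) (hl : Ordinal.omega0 ≤ l)
    {J : Set (Set (Set Ordinal.{0}))} (hJ : IsIdeal κ l J)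
    {n : ℕ} (hn2 : 2 ≤ n) (hnorm : nabla κ l ((n : ℕ) : Cardinal.{0}) δ J ⊆ J) :
    ∀ k : ℕ, n ≤ k → nabla κ l ((k : ℕ) : Cardinal.{0}) δ J ⊆ J := by
  intro k hk
  induction k, hk using Nat.le_induction with
  | base => exact hnorm
  | succ k hk IH =>
    rintro B ⟨F, hF, hcov⟩
    have hBP : B ⊆ PSet κ l := nabla_subset_PSet hJ.mem_subset ⟨F, hF, hcov⟩
    have hU1 : {a | a ∈ PSet κ l ∧ ¬Set.Iio ((k + 1 : ℕ) : Ordinal.{0}) ⊆ a} ∈ J :=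
      hJ.nonCofinal_subset ⟨fun a ha => ha.1, Set.Iio ((k + 1 : ℕ) : Ordinal.{0}), Iio_natCast_mem_PSet hκ hl (k + 1),
        fun b hb hsub => hb.2 hsub⟩
    -- the auxiliary sets `L ε`
    have hL : ∀ ε : Set Ordinal.{0},
        {a | a ∈ PSet κ l ∧ Set.Iio ((k + 1 : ℕ) : Ordinal.{0}) ⊆ a ∧ ∃ e' : Set Ordinal.{0}, e' ⊆ a ∩ Set.Iio δ ∧
          #↥e' < ((k : ℕ) : Cardinal.{1}) ∧ (e' ∪ ε) ∈ PSet ((k + 1 : ℕ) : Cardinal.{0}) δ ∧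
          a ∈ F (e' ∪ ε)} ∈ J := by
      intro ε
      classical
      refine IH ⟨fun c => if (c ∪ ε) ∈ PSet ((k + 1 : ℕ) : Cardinal.{0}) δ then F (c ∪ ε)
        else ∅, ?_, ?_⟩
      · intro c _
        dsimp only
        split
        · exact hF _ ‹_›
        · exact hJ.nonCofinal_subset (empty_mem_Ikl hκ)
      · rintro a ⟨haP, haO1, e', he'sub, he'card, heP, haF⟩
        right
        simp only [mem_iUnion, exists_prop]
        have hIk : Set.Iio ((k : ℕ) : Ordinal.{0}) ⊆ a := fun x hx =>
          haO1 (Set.mem_Iio.2 (lt_of_lt_of_le (Set.mem_Iio.1 hx)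
            (by exact_mod_cast Nat.le_succ k)))
        refine ⟨e', ⟨he'sub.trans inter_subset_right, ?_⟩, ?_, he'sub, ?_⟩
        · rw [Cardinal.lift_natCast]; exact he'card
        · rw [if_pos heP]; exact haF
        · exact lt_of_lt_of_eq he'card (mk_inter_Iio_nat hIk).symm
    -- the set of `a ∈ B` containing `Iio (k+1)` is in `J`, via `n`-normality
    have hS : B ∩ {a | Set.Iio ((k + 1 : ℕ) : Ordinal.{0}) ⊆ a} ∈ J := by
      refine hnorm ⟨fun ε => {a | a ∈ PSet κ l ∧ Set.Iio ((k + 1 : ℕ) : Ordinal.{0}) ⊆ a ∧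
        ∃ e' : Set Ordinal.{0}, e' ⊆ a ∩ Set.Iio δ ∧ #↥e' < ((k : ℕ) : Cardinal.{1}) ∧
        (e' ∪ ε) ∈ PSet ((k + 1 : ℕ) : Cardinal.{0}) δ ∧ a ∈ F (e' ∪ ε)},
        fun ε _ => hL ε, ?_⟩
      rintro a ⟨haB, haO1⟩
      have haP : a ∈ PSet κ l := hBP haB
      have h0a : (0 : Ordinal.{0}) ∈ a :=
        haO1 (Set.mem_Iio.2 (by exact_mod_cast Nat.succ_pos k))
      have hIn : Set.Iio ((n : ℕ) : Ordinal.{0}) ⊆ a := fun x hx =>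
        haO1 (Set.mem_Iio.2 (lt_of_lt_of_le (Set.mem_Iio.1 hx)
          (by exact_mod_cast le_trans hk (Nat.le_succ k))))
      rcases hcov haB with h | h
      · exfalso
        have : (0 : Ordinal.{0}) ∈ a ∩ Set.Iio (((k + 1 : ℕ) : Cardinal.{0})).ord := by
          refine ⟨h0a, ?_⟩
          rw [Cardinal.ord_nat]
          simpa using (by exact_mod_cast Nat.succ_pos k : (0 : Ordinal.{0}) < ((k + 1 : ℕ) : Ordinal.{0}))
        rw [h.2] at this
        exact this
      · simp only [mem_iUnion, exists_prop] at h
        obtain ⟨e, heP, haF, he1, he2⟩ := h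
        rw [mk_inter_Iio_nat haO1] at he2
        have hecard : #↥e < ((k + 1 : ℕ) : Cardinal.{1}) := he2
        have hefin : e.Finite := by
          rw [← Cardinal.lt_aleph0_iff_set_finite]
          exact lt_trans hecard (Cardinal.nat_lt_aleph0 (k + 1))
        right
        simp only [mem_iUnion, exists_prop]
        obtain ⟨E, rfl⟩ : ∃ E : Finset Ordinal.{0}, (↑E : Set Ordinal.{0}) = e :=
          ⟨hefin.toFinset, hefin.coe_toFinset⟩
        have hcardlt : E.card < k + 1 := by
          rw [mk_finset_coe] at hecard
          exact_mod_cast hecard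
        by_cases hsmall : E.card < k
        · -- use ε = ∅
          refine ⟨∅, empty_mem_PSet (by exact_mod_cast (by omega : 0 < n)), ?_,
            empty_subset _, ?_⟩
          · refine ⟨haP, haO1, ↑E, he1, ?_, by rwa [union_empty], by rwa [union_empty]⟩
            rw [mk_finset_coe]
            exact_mod_cast hsmall
          · rw [Cardinal.mk_emptyCollection, mk_inter_Iio_nat hIn]
            exact_mod_cast (by omega : 0 < n)
        · -- |e| = k : use ε = {x}
          have hcardk : E.card = k := by omega
          obtain ⟨x, hxF⟩ : E.Nonempty := Finset.card_pos.1 (by omega)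
          have hx : x ∈ (↑E : Set Ordinal.{0}) := hxF
          refine ⟨{x}, ⟨singleton_subset_iff.2 ((he1 hx).2), ?_⟩, ?_, ?_, ?_⟩
          · rw [Cardinal.mk_singleton, Cardinal.lift_natCast]
            exact_mod_cast hn2
          · refine ⟨haP, haO1, (↑E : Set Ordinal.{0}) \ {x}, diff_subset.trans he1, ?_, ?_, ?_⟩
            · rw [← Finset.coe_erase, mk_finset_coe]
              have : (E.erase x).card < k := by
                rw [Finset.card_erase_of_mem hxF, hcardk]
                omega
              exact_mod_cast this
            · rwa [diff_union_of_subset (singleton_subset_iff.2 hx)]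
            · rwa [diff_union_of_subset (singleton_subset_iff.2 hx)]
          · exact singleton_subset_iff.2 (he1 hx)
          · rw [Cardinal.mk_singleton, mk_inter_Iio_nat hIn]
            exact_mod_cast hn2
    have hunion : ({a | a ∈ PSet κ l ∧ ¬Set.Iio ((k + 1 : ℕ) : Ordinal.{0}) ⊆ a} ∪ (B ∩ {a | Set.Iio ((k + 1 : ℕ) : Ordinal.{0}) ⊆ a})) ∈ J :=
      hJ.union_mem hκ hU1 hS
    refine hJ.subset_mem _ hunion B fun a haB => ?_
    by_cases hc : Set.Iio ((k + 1 : ℕ) : Ordinal.{0}) ⊆ a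
    · exact Or.inr ⟨haB, hc⟩
    · exact Or.inl ⟨hBP haB, hc⟩

/-- Lemma A : any `[δ]^{<θ}`-normal ideal absorbs `∇^{[δ]^{<θ̄·3}}`. -/
theorem lemmaA {θ : Cardinal.{0}} (hκ : κ.IsRegular) (hl : Ordinal.omega0 ≤ l) (hl0 : 0 < l)
    (hθ2 : 2 ≤ θ) (hθκ : θ ≤ κ) {J : Set (Set (Set Ordinal.{0}))} (hJ : IsIdeal κ l J)
    (hnorm : nabla κ l θ δ J ⊆ J) : nabla κ l (thetaBar κ θ * 3) δ J ⊆ J := by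
  obtain ⟨h3, hσκ, -, hcase⟩ := thetaBar_facts hκ hθ2 hθκ
  rcases hcase with hle | ⟨n, hn2, hθn, hσn⟩
  · intro B hB
    exact hnorm (nabla_mono_sigma hJ hκ hl0
      (lt_of_lt_of_le (by norm_num : (0 : Cardinal.{0}) < 3) h3) hle hB)
  · rw [hσn]
    exact lemmaA_fin hκ hl hJ hn2 (by rwa [hθn] at hnorm) (3 * n)
      (Nat.le_mul_of_pos_left n (by norm_num))

/-- The target property for the witness function constructed in the normality proof. -/
def WStar (κ θ σ : Cardinal.{0}) (l δ : Ordinal.{0})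
    (W' : Set Ordinal.{0} → Set Ordinal.{0} → Set Ordinal.{0}) : Prop :=
  ∃ w : Set Ordinal.{0} → Set Ordinal.{0},
    (∀ c : Set Ordinal.{0}, w c ∈ PSet κ l) ∧
    ∀ a ∈ Cw κ l σ δ w, (0 : Ordinal.{0}) ∈ a ∧
      ∀ e c : Set Ordinal.{0}, e ⊆ a ∩ Set.Iio δ → #↥e < mSet θ a →
        c ⊆ a ∩ Set.Iio δ → #↥c < mSet σ a → W' e c ⊆ a

section Star

variable {κ θ σ : Cardinal.{0}} {l δ : Ordinal.{0}}
variable {W' : Set Ordinal.{0} → Set Ordinal.{0} → Set Ordinal.{0}}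

theorem empty_code_valid {w : Set Ordinal.{0} → Set Ordinal.{0}} {a : Set Ordinal.{0}}
    (ha : a ∈ Cw κ l σ δ w) : w ∅ ⊆ a := by
  refine ha.2.2 ∅ (empty_subset _) ?_
  rw [Cardinal.mk_emptyCollection]
  exact mSet_pos ha.2.1

/-- Case A : `δ` finite. -/
theorem wstar_caseA (hκ : κ.IsRegular) (hl0 : 0 < l)
    (hW' : ∀ e c, W' e c ∈ PSet κ l) (hδfin : δ < Ordinal.omega0) :
    WStar κ θ σ l δ W' := by
  have hIiofin : (Set.Iio δ).Finite := by
    obtain ⟨n, rfl⟩ := Ordinal.lt_omega0.1 hδfin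
    have hsub : Set.Iio ((n : ℕ) : Ordinal.{0}) ⊆
        (fun m : ℕ => (m : Ordinal.{0})) '' Set.Iio n := by
      intro x hx
      have hxω : x < Ordinal.omega0 :=
        lt_of_lt_of_le hx (le_of_lt (Ordinal.nat_lt_omega0 n))
      obtain ⟨m, rfl⟩ := Ordinal.lt_omega0.1 hxω
      exact ⟨m, Set.mem_Iio.2 (by exact_mod_cast Set.mem_Iio.1 hx), rfl⟩
    exact Set.Finite.subset ((Set.finite_Iio n).image _) hsub
  have hPfin : {s : Set Ordinal.{0} | s ⊆ Set.Iio δ}.Finite := hIiofin.finite_subsets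
  refine ⟨fun _ => {0} ∪ ⋃ s ∈ {s : Set Ordinal.{0} | s ⊆ Set.Iio δ},
      ⋃ t ∈ {s : Set Ordinal.{0} | s ⊆ Set.Iio δ}, W' s t, fun c => ?_, fun a ha => ?_⟩
  · refine union_mem_PSet hκ (singleton_zero_mem_PSet hκ hl0) ?_
    refine biUnion_mem_PSet hκ (lt_of_lt_of_le hPfin.lt_aleph0 (aleph0_le_lift_kappa hκ))
      fun s _ => ?_
    exact biUnion_mem_PSet hκ (lt_of_lt_of_le hPfin.lt_aleph0 (aleph0_le_lift_kappa hκ))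
      fun t _ => hW' s t
  · have hw0 := empty_code_valid ha
    constructor
    · exact hw0 (Or.inl rfl)
    · intro e c he1 _ hc1 _
      intro x hx
      refine hw0 (Or.inr ?_)
      simp only [mem_iUnion, exists_prop]
      exact ⟨e, fun y hy => (he1 hy).2, c, fun y hy => (hc1 hy).2, hx⟩

theorem aleph0_le_mk_Iio (hδω : Ordinal.omega0 ≤ δ) : ℵ₀ ≤ #↥(Set.Iio δ) := by
  rw [Ordinal.mk_Iio_ordinal]
  exact Cardinal.aleph0_le_lift.2 (Ordinal.aleph0_le_card.2 hδω)

/-- An injective naming of finite subsets of `Iio δ` by elements of `Iio δ`. -/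
theorem exists_naming (hδω : Ordinal.omega0 ≤ δ) :
    ∃ HO : Set Ordinal.{0} → Ordinal.{0},
      (∀ s : Set Ordinal.{0}, s ⊆ Set.Iio δ → s.Finite → HO s < δ) ∧
      (∀ s t : Set Ordinal.{0}, s ⊆ Set.Iio δ → s.Finite → t ⊆ Set.Iio δ → t.Finite →
        HO s = HO t → s = t) := by
  classical
  have hinf : ℵ₀ ≤ #↥(Set.Iio δ) := aleph0_le_mk_Iio hδω
  haveI : Infinite ↥(Set.Iio δ) := Cardinal.aleph0_le_mk_iff.1 hinf
  -- the finite subsets of `Iio δ` inject into `Finset ↥(Iio δ)`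
  have hcard : #{s : Set Ordinal.{0} // s ⊆ Set.Iio δ ∧ s.Finite} ≤ #↥(Set.Iio δ) := by
    rw [← Cardinal.mk_finset_of_infinite ↥(Set.Iio δ)]
    have hinj : Function.Injective
        (fun s : {s : Set Ordinal.{0} // s ⊆ Set.Iio δ ∧ s.Finite} =>
          (s.2.2.preimage (Subtype.val_injective.injOn) :
            (Subtype.val ⁻¹' s.1 : Set ↥(Set.Iio δ)).Finite).toFinset) := by
      rintro ⟨s, hs1, hs2⟩ ⟨t, ht1, ht2⟩ h
      simp only at h
      have : (Subtype.val ⁻¹' s : Set ↥(Set.Iio δ)) = Subtype.val ⁻¹' t := by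
        rw [← Set.Finite.coe_toFinset (hs2.preimage (Subtype.val_injective.injOn)),
          ← Set.Finite.coe_toFinset (ht2.preimage (Subtype.val_injective.injOn)), h]
      have him := congrArg (Set.image (Subtype.val :
        ↥(Set.Iio δ) → Ordinal.{0})) this
      rw [Set.image_preimage_eq_inter_range, Set.image_preimage_eq_inter_range,
        Subtype.range_coe, inter_eq_self_of_subset_left hs1,
        inter_eq_self_of_subset_left ht1] at him
      exact Subtype.ext him
    exact Cardinal.mk_le_of_injective hinj
  obtain ⟨Hf⟩ := (Cardinal.le_def _ _).1 hcard
  refine ⟨fun s => if h : s ⊆ Set.Iio δ ∧ s.Finite then (Hf ⟨s, h⟩).1 else 0,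
    fun s hs1 hs2 => ?_, fun s t hs1 hs2 ht1 ht2 h => ?_⟩
  · dsimp only
    rw [dif_pos ⟨hs1, hs2⟩]
    exact (Hf ⟨s, ⟨hs1, hs2⟩⟩).2
  · dsimp only at h
    rw [dif_pos ⟨hs1, hs2⟩, dif_pos ⟨ht1, ht2⟩] at h
    have := Hf.injective (Subtype.ext h)
    exact congrArg Subtype.val this

theorem three_le_mSet {a : Set Ordinal.{0}} (h3σ : (3 : Cardinal.{0}) ≤ σ)
    (ha : Set.Iio ((3 : ℕ) : Ordinal.{0}) ⊆ a) : ((3 : ℕ) : Cardinal.{1}) ≤ mSet σ a := by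
  have h1 : mSet ((3 : ℕ) : Cardinal.{0}) a = ((3 : ℕ) : Cardinal.{1}) := mSet_nat_of_subset ha
  have h2 : mSet ((3 : ℕ) : Cardinal.{0}) a ≤ mSet σ a := mSet_mono (by exact_mod_cast h3σ) a
  rw [← h1]; exact h2

theorem mk_pair_le_two (x y : Ordinal.{0}) :
    #↥({x, y} : Set Ordinal.{0}) ≤ ((2 : ℕ) : Cardinal.{1}) := by
  refine le_trans (Cardinal.mk_insert_le ..) ?_
  rw [Cardinal.mk_singleton]
  norm_num

/-- Case C : `δ` infinite, and everything relevant is finite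
(`σ` finite, or `κ = ℵ₀`). -/
theorem wstar_caseC (hκ : κ.IsRegular) (hωl : Ordinal.omega0 ≤ l) (hδl : δ ≤ l)
    (hW' : ∀ e c, W' e c ∈ PSet κ l) (hδω : Ordinal.omega0 ≤ δ)
    (h3σ : (3 : Cardinal.{0}) ≤ σ) (hθσ : θ ≤ σ)
    (hfin : Cardinal.lift.{1} σ < ℵ₀ ∨ κ = ℵ₀) :
    WStar κ θ σ l δ W' := by
  classical
  obtain ⟨HO, hHOlt, hHOinj⟩ := exists_naming hδω
  set good : Set Ordinal.{0} → Prop := fun s => s ⊆ Set.Iio δ ∧ s.Finite with hgood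
  refine ⟨fun c => Set.Iio ((3 : ℕ) : Ordinal.{0}) ∪
    (if good c then {HO c} else ∅) ∪
    (if c.Finite then ⋃ x ∈ c, ⋃ y ∈ c,
      ⋃ s ∈ {s : Set Ordinal.{0} | good s ∧ HO s = x},
      ⋃ t ∈ {t : Set Ordinal.{0} | good t ∧ HO t = y}, W' s t else ∅),
    fun c => ?_, fun a ha => ?_⟩
  · refine union_mem_PSet hκ (union_mem_PSet hκ (Iio_natCast_mem_PSet hκ hωl 3) ?_) ?_
    · split
      · rename_i h
        exact singleton_mem_PSet hκ (lt_of_lt_of_le (hHOlt c h.1 h.2) hδl)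
      · exact empty_mem_PSet hκ.pos
    · split
      · rename_i hcfin
        have hsub : ∀ x : Ordinal.{0}, {s : Set Ordinal.{0} | good s ∧ HO s = x}.Subsingleton :=
          fun x s hs t ht => hHOinj s t hs.1.1 hs.1.2 ht.1.1 ht.1.2 (hs.2.trans ht.2.symm)
        have hxcard : #↥c < Cardinal.lift.{1} κ :=
          lt_of_lt_of_le hcfin.lt_aleph0 (aleph0_le_lift_kappa hκ)
        refine biUnion_mem_PSet hκ hxcard fun x _ => ?_
        refine biUnion_mem_PSet hκ hxcard fun y _ => ?_
        have h1 : #↥{s : Set Ordinal.{0} | good s ∧ HO s = x} < Cardinal.lift.{1} κ :=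
          lt_of_le_of_lt ((hsub x).cardinalMk_le_one)
            (lt_of_lt_of_le Cardinal.one_lt_aleph0 (aleph0_le_lift_kappa hκ))
        have h2 : #↥{t : Set Ordinal.{0} | good t ∧ HO t = y} < Cardinal.lift.{1} κ :=
          lt_of_le_of_lt ((hsub y).cardinalMk_le_one)
            (lt_of_lt_of_le Cardinal.one_lt_aleph0 (aleph0_le_lift_kappa hκ))
        exact biUnion_mem_PSet hκ h1 fun s _ =>
          biUnion_mem_PSet hκ h2 fun t _ => hW' s t
      · exact empty_mem_PSet hκ.pos
  · have hw0 := empty_code_valid ha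
    have h3a : Set.Iio ((3 : ℕ) : Ordinal.{0}) ⊆ a := fun x hx => hw0 (Or.inl (Or.inl hx))
    have h0a : (0 : Ordinal.{0}) ∈ a := h3a (Set.mem_Iio.2 (by exact_mod_cast Nat.zero_lt_succ 2))
    refine ⟨h0a, ?_⟩
    intro e c he1 he2 hc1 hc2
    -- everything in sight is finite
    have hfin' : ∀ s : Set Ordinal.{0}, s ⊆ a ∩ Set.Iio δ → #↥s < mSet σ a → s.Finite := by
      intro s hs1 hs2
      rcases hfin with h | h
      · rw [← Cardinal.lt_aleph0_iff_set_finite]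
        exact lt_trans (lt_of_lt_of_le hs2 (mSet_le_lift σ a)) h
      · have haP : #↥a < ℵ₀ := by
          have := ha.1.2
          rwa [h, Cardinal.lift_aleph0] at this
        rw [← Cardinal.lt_aleph0_iff_set_finite]
        exact lt_of_le_of_lt (Cardinal.mk_le_mk_of_subset (hs1.trans inter_subset_left)) haP
    have hce : #↥e < mSet σ a := lt_of_lt_of_le he2 (mSet_mono hθσ a)
    have hefin : e.Finite := hfin' e he1 hce
    have hcfin : c.Finite := hfin' c hc1 hc2
    have hegood : good e := ⟨fun x hx => (he1 hx).2, hefin⟩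
    have hcgood : good c := ⟨fun x hx => (hc1 hx).2, hcfin⟩
    -- HO e and HO c are in a
    have hHOe : HO e ∈ a := by
      have := ha.2.2 e he1 hce
      exact this (Or.inl (Or.inr (by rw [if_pos hegood]; exact rfl)))
    have hHOc : HO c ∈ a := by
      have := ha.2.2 c hc1 hc2
      exact this (Or.inl (Or.inr (by rw [if_pos hcgood]; exact rfl)))
    -- the pair code
    have hpairsub : ({HO e, HO c} : Set Ordinal.{0}) ⊆ a ∩ Set.Iio δ := by
      rintro x (rfl | rfl)
      · exact ⟨hHOe, Set.mem_Iio.2 (hHOlt e hegood.1 hegood.2)⟩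
      · exact ⟨hHOc, Set.mem_Iio.2 (hHOlt c hcgood.1 hcgood.2)⟩
    have hpaircard : #↥({HO e, HO c} : Set Ordinal.{0}) < mSet σ a := by
      refine lt_of_le_of_lt (mk_pair_le_two _ _) (lt_of_lt_of_le ?_ (three_le_mSet h3σ h3a))
      exact_mod_cast Nat.lt_succ_self 2
    have hwp := ha.2.2 _ hpairsub hpaircard
    have hpairfin : ({HO e, HO c} : Set Ordinal.{0}).Finite := (Set.finite_singleton _).insert _
    intro z hz
    refine hwp (Or.inr ?_)
    rw [if_pos hpairfin]
    simp only [mem_iUnion, exists_prop]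
    exact ⟨HO e, Or.inl rfl, HO c, Or.inr rfl, e, ⟨hegood, rfl⟩, c, ⟨hcgood, rfl⟩, hz⟩

/-- Case B : `δ` infinite, `σ` infinite, `κ > ℵ₀`. Tag-coding of pairs. -/
theorem wstar_caseB (hκ : κ.IsRegular) (hωl : Ordinal.omega0 ≤ l) (hδl : δ ≤ l)
    (hσl : σ.ord ≤ l) (hW' : ∀ e c, W' e c ∈ PSet κ l) (hδω : Ordinal.omega0 ≤ δ)
    (hσinf : ℵ₀ ≤ σ) (hκω : ℵ₀ < κ) (hσκ : σ ≤ κ)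
    (hval : θ ≤ σ ∨ (σ < κ ∧ Cardinal.lift.{1} κ = Order.succ (Cardinal.lift.{1} σ))) :
    WStar κ θ σ l δ W' := by
  classical
  -- two injections of `Iio δ` into itself with disjoint ranges
  have hsum : #(↥(Set.Iio δ) ⊕ ↥(Set.Iio δ)) ≤ #↥(Set.Iio δ) := by
    rw [Cardinal.mk_sum]
    simp only [Cardinal.lift_id]
    exact le_of_eq (Cardinal.add_eq_self (aleph0_le_mk_Iio hδω))
  obtain ⟨Hf⟩ := (Cardinal.le_def _ _).1 hsum
  set G0 : Ordinal.{0} → Ordinal.{0} :=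
    fun α => if h : α < δ then (Hf (Sum.inl ⟨α, h⟩)).1 else 0 with hG0def
  set G1 : Ordinal.{0} → Ordinal.{0} :=
    fun α => if h : α < δ then (Hf (Sum.inr ⟨α, h⟩)).1 else 0 with hG1def
  have hG0lt : ∀ {α : Ordinal.{0}}, α < δ → G0 α < δ := by
    intro α h
    rw [hG0def]; dsimp only
    rw [dif_pos h]
    exact (Hf (Sum.inl ⟨α, h⟩)).2
  have hG1lt : ∀ {α : Ordinal.{0}}, α < δ → G1 α < δ := by
    intro α h
    rw [hG1def]; dsimp only
    rw [dif_pos h]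
    exact (Hf (Sum.inr ⟨α, h⟩)).2
  have hG0inj : ∀ {α β : Ordinal.{0}}, α < δ → β < δ → G0 α = G0 β → α = β := by
    intro α β hα hβ h
    rw [hG0def] at h; dsimp only at h
    rw [dif_pos hα, dif_pos hβ] at h
    have := Hf.injective (Subtype.ext h)
    simpa using congrArg (fun x => Sum.elim Subtype.val Subtype.val x) this
  have hG1inj : ∀ {α β : Ordinal.{0}}, α < δ → β < δ → G1 α = G1 β → α = β := by
    intro α β hα hβ h
    rw [hG1def] at h; dsimp only at h
    rw [dif_pos hα, dif_pos hβ] at h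
    have := Hf.injective (Subtype.ext h)
    simpa using congrArg (fun x => Sum.elim Subtype.val Subtype.val x) this
  have hcross : ∀ {α β : Ordinal.{0}}, α < δ → β < δ → G0 α ≠ G1 β := by
    intro α β hα hβ h
    rw [hG0def, hG1def] at h; dsimp only at h
    rw [dif_pos hα] at h
    rw [dif_pos hβ] at h
    have := Hf.injective (Subtype.ext h)
    simp at this
  -- the pump
  set pump : Set Ordinal.{0} :=
    Set.Iio Ordinal.omega0 ∪ (if σ < κ then Set.Iio σ.ord else ∅) with hpumpdef
  have hpumpP : pump ∈ PSet κ l := by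
    refine union_mem_PSet hκ ⟨Iio_subset_Iio hωl, ?_⟩ ?_
    · rw [Ordinal.mk_Iio_ordinal, Ordinal.card_omega0, Cardinal.lift_aleph0]
      have : Cardinal.lift.{1} ℵ₀ < Cardinal.lift.{1} κ := Cardinal.lift_lt.2 hκω
      rwa [Cardinal.lift_aleph0] at this
    · split
      · refine ⟨Iio_subset_Iio hσl, ?_⟩
        rw [mk_Iio_ord]
        exact Cardinal.lift_lt.2 ‹σ < κ›
      · exact empty_mem_PSet hκ.pos
  have hωσ : Ordinal.omega0 ≤ σ.ord := Cardinal.omega0_le_ord.2 hσinf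
  -- the witness function
  refine ⟨fun c => pump ∪
    (if c ∈ PSet σ δ then G0 '' (c ∩ Set.Iio δ) ∪ G1 '' (c ∩ Set.Iio δ) else ∅) ∪
    W' {α : Ordinal.{0} | α < δ ∧ G0 α ∈ c} {α : Ordinal.{0} | α < δ ∧ G1 α ∈ c},
    fun c => ?_, fun a ha => ?_⟩
  · refine union_mem_PSet hκ (union_mem_PSet hκ hpumpP ?_) (hW' _ _)
    split
    · rename_i hcP
      have himg : ∀ G : Ordinal.{0} → Ordinal.{0}, (∀ {α : Ordinal.{0}}, α < δ → G α < δ) →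
          G '' (c ∩ Set.Iio δ) ∈ PSet κ l := by
        intro G hG
        constructor
        · rintro x ⟨α, hα, rfl⟩
          exact Set.mem_Iio.2 (lt_of_lt_of_le (hG hα.2) hδl)
        · exact lt_of_le_of_lt (le_trans Cardinal.mk_image_le
            (Cardinal.mk_le_mk_of_subset inter_subset_left))
            (lt_of_lt_of_le hcP.2 (Cardinal.lift_le.2 hσκ))
      exact union_mem_PSet hκ (himg G0 fun h => hG0lt h) (himg G1 fun h => hG1lt h)
    · exact empty_mem_PSet hκ.pos
  · have hw0 := empty_code_valid ha
    have hIioω : Set.Iio Ordinal.omega0 ⊆ a := fun x hx => hw0 (Or.inl (Or.inl (Or.inl hx)))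
    have h0a : (0 : Ordinal.{0}) ∈ a := hIioω (Set.mem_Iio.2 Ordinal.omega0_pos)
    have hmainf : ℵ₀ ≤ mSet σ a := by
      have hsub : Set.Iio Ordinal.omega0 ⊆ a ∩ Set.Iio σ.ord := fun x hx =>
        ⟨hIioω hx, Set.mem_Iio.2 (lt_of_lt_of_le (Set.mem_Iio.1 hx) hωσ)⟩
      have : #↥(Set.Iio Ordinal.omega0) ≤ mSet σ a := Cardinal.mk_le_mk_of_subset hsub
      rwa [Ordinal.mk_Iio_ordinal, Ordinal.card_omega0, Cardinal.lift_aleph0] at this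
    refine ⟨h0a, ?_⟩
    intro e c he1 he2 hc1 hc2
    -- validity of `e` as a `σ`-code
    have hce : #↥e < mSet σ a := by
      rcases hval with hθσ | ⟨hσκ', hsucc⟩
      · exact lt_of_lt_of_le he2 (mSet_mono hθσ a)
      · have hIioσ : Set.Iio σ.ord ⊆ a := fun x hx =>
          hw0 (Or.inl (Or.inl (Or.inr (by rw [if_pos hσκ']; exact hx))))
        have hexact : mSet σ a = Cardinal.lift.{1} σ := by
          refine le_antisymm (mSet_le_lift σ a) ?_
          rw [← mk_Iio_ord σ]
          exact Cardinal.mk_le_mk_of_subset fun x hx => ⟨hIioσ hx, hx⟩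
        have h1 : mSet θ a ≤ Cardinal.lift.{1} σ := by
          rw [← Order.lt_succ_iff, ← hsucc]
          exact lt_of_le_of_lt (mSet_le_mk θ a) ha.1.2
        rw [hexact]
        exact lt_of_lt_of_le he2 h1
    -- singletons put the tags into `a`
    have hsingle : ∀ α : Ordinal.{0}, α ∈ a ∩ Set.Iio δ → G0 α ∈ a ∧ G1 α ∈ a := by
      intro α hα
      have hone : #↥({α} : Set Ordinal.{0}) < mSet σ a := by
        rw [Cardinal.mk_singleton]
        exact lt_of_lt_of_le Cardinal.one_lt_aleph0 hmainf
      have hsP : ({α} : Set Ordinal.{0}) ∈ PSet σ δ := by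
        refine ⟨by simpa using hα.2, ?_⟩
        rw [Cardinal.mk_singleton]
        exact lt_of_lt_of_le Cardinal.one_lt_aleph0 (Cardinal.aleph0_le_lift.2 hσinf)
      have hws := ha.2.2 {α} (by simpa using hα) hone
      have hint : ({α} : Set Ordinal.{0}) ∩ Set.Iio δ = {α} := by
        refine inter_eq_self_of_subset_left ?_
        simpa using hα.2
      constructor
      · refine hws (Or.inl (Or.inr ?_))
        rw [if_pos hsP, hint]
        exact Or.inl ⟨α, rfl, rfl⟩
      · refine hws (Or.inl (Or.inr ?_))
        rw [if_pos hsP, hint]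
        exact Or.inr ⟨α, rfl, rfl⟩
    -- the pair code
    set c₂ : Set Ordinal.{0} := G0 '' e ∪ G1 '' c with hc₂def
    have hc₂sub : c₂ ⊆ a ∩ Set.Iio δ := by
      rintro x (⟨α, hα, rfl⟩ | ⟨α, hα, rfl⟩)
      · exact ⟨(hsingle α (he1 hα)).1, Set.mem_Iio.2 (hG0lt (he1 hα).2)⟩
      · exact ⟨(hsingle α (hc1 hα)).2, Set.mem_Iio.2 (hG1lt (hc1 hα).2)⟩
    have hc₂card : #↥c₂ < mSet σ a := by
      refine lt_of_le_of_lt (Cardinal.mk_union_le _ _) ?_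
      exact Cardinal.add_lt_of_lt hmainf
        (lt_of_le_of_lt Cardinal.mk_image_le hce)
        (lt_of_le_of_lt Cardinal.mk_image_le hc2)
    have hwc₂ := ha.2.2 c₂ hc₂sub hc₂card
    -- decoding
    have hD0 : {α : Ordinal.{0} | α < δ ∧ G0 α ∈ c₂} = e := by
      ext α
      constructor
      · rintro ⟨hαδ, hmem | hmem⟩
        · obtain ⟨β, hβ, heq⟩ := hmem
          rwa [hG0inj ((he1 hβ).2) hαδ heq] at hβ
        · obtain ⟨β, hβ, heq⟩ := hmem
          exact absurd heq.symm (hcross hαδ ((hc1 hβ).2))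
      · intro hα
        exact ⟨(he1 hα).2, Or.inl ⟨α, hα, rfl⟩⟩
    have hD1 : {α : Ordinal.{0} | α < δ ∧ G1 α ∈ c₂} = c := by
      ext α
      constructor
      · rintro ⟨hαδ, hmem | hmem⟩
        · obtain ⟨β, hβ, heq⟩ := hmem
          exact absurd heq (hcross ((he1 hβ).2) hαδ)
        · obtain ⟨β, hβ, heq⟩ := hmem
          rwa [hG1inj ((hc1 hβ).2) hαδ heq] at hβ
      · intro hα
        exact ⟨(hc1 hα).2, Or.inr ⟨α, hα, rfl⟩⟩
    have hfinal : W' {α : Ordinal.{0} | α < δ ∧ G0 α ∈ c₂}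
        {α : Ordinal.{0} | α < δ ∧ G1 α ∈ c₂} ⊆ a := fun z hz => hwc₂ (Or.inr hz)
    rw [hD0, hD1] at hfinal
    exact hfinal

/-- The case dispatcher. -/
theorem exists_wstar (hκ : κ.IsRegular) (hωl : Ordinal.omega0 ≤ l) (hl0 : 0 < l)
    (hδl : δ ≤ l) (hσl : σ.ord ≤ l) (hW' : ∀ e c, W' e c ∈ PSet κ l)
    (h3σ : (3 : Cardinal.{0}) ≤ σ) (hσκ : σ ≤ κ)
    (hval3 : θ ≤ σ ∨ (σ < κ ∧ ℵ₀ ≤ σ ∧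
      Cardinal.lift.{1} κ = Order.succ (Cardinal.lift.{1} σ))) :
    WStar κ θ σ l δ W' := by
  rcases lt_or_ge δ Ordinal.omega0 with hδfin | hδω
  · exact wstar_caseA hκ hl0 hW' hδfin
  rcases lt_or_ge σ ℵ₀ with hσfin | hσinf
  · have hθσ : θ ≤ σ := hval3.resolve_right fun h => absurd h.2.1 (not_le.2 hσfin)
    refine wstar_caseC hκ hωl hδl hW' hδω h3σ hθσ (Or.inl ?_)
    have : Cardinal.lift.{1} σ < Cardinal.lift.{1} ℵ₀ := Cardinal.lift_lt.2 hσfin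
    rwa [Cardinal.lift_aleph0] at this
  rcases eq_or_lt_of_le hκ.1 with hκω | hκω
  · have hθσ : θ ≤ σ := hval3.resolve_right fun h =>
      absurd h.1 (not_lt.2 (hκω ▸ hσinf))
    exact wstar_caseC hκ hωl hδl hW' hδω h3σ hθσ (Or.inr hκω.symm)
  · exact wstar_caseB hκ hωl hδl hσl hW' hδω hσinf hκω hσκ
      (hval3.imp_right fun h => ⟨h.1, h.2.2⟩)

end Star

section Main

variable {κ lam θ : Cardinal.{0}} {δ : Ordinal.{0}}

/-- The key normality step : `∇^{[δ]^{<θ}} N ⊆ N`. -/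
theorem star_lemma (hκ : κ.IsRegular) (hkl : κ ≤ lam) (hθ2 : 2 ≤ θ) (hθκ : θ ≤ κ)
    (hdl : δ ≤ lam.ord) :
    nabla κ lam.ord θ δ (nabla κ lam.ord (thetaBar κ θ * 3) δ (Ikl κ lam.ord)) ⊆
      nabla κ lam.ord (thetaBar κ θ * 3) δ (Ikl κ lam.ord) := by
  classical
  obtain ⟨h3σ, hσκ, hval, -⟩ := thetaBar_facts hκ hθ2 hθκ
  set σ := thetaBar κ θ * 3 with hσdef
  have hωl : Ordinal.omega0 ≤ lam.ord := Cardinal.omega0_le_ord.2 (le_trans hκ.1 hkl)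
  have hl0 : (0 : Ordinal.{0}) < lam.ord := lt_of_lt_of_le Ordinal.omega0_pos hωl
  have hσl : σ.ord ≤ lam.ord := Cardinal.ord_le_ord.2 (le_trans hσκ hkl)
  intro B hB
  obtain ⟨F, hF, hcov⟩ := hB
  have hNsub : ∀ C ∈ nabla κ lam.ord σ δ (Ikl κ lam.ord), C ⊆ PSet κ lam.ord :=
    fun C hC => nabla_subset_PSet Ikl_subset_PSet hC
  have hBP : B ⊆ PSet κ lam.ord := by
    intro a ha
    rcases hcov ha with h | h
    · exact h.1
    · simp only [mem_iUnion, exists_prop] at h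
      obtain ⟨e, he, haF, -⟩ := h
      exact hNsub (F e) (hF e he) haF
  have hch : ∀ e : Set Ordinal.{0}, ∃ w : Set Ordinal.{0} → Set Ordinal.{0},
      e ∈ PSet θ δ → ((∀ c ∈ PSet σ δ, w c ∈ PSet κ lam.ord) ∧
        F e ∩ Cw κ lam.ord σ δ w = ∅) := by
    intro e
    by_cases he : e ∈ PSet θ δ
    · obtain ⟨-, w, hw⟩ := (mem_nabla_Ikl_iff hκ).1 (hF e he)
      exact ⟨w, fun _ => hw⟩
    · exact ⟨fun _ => ∅, fun h => absurd h he⟩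
  set W : Set Ordinal.{0} → Set Ordinal.{0} → Set Ordinal.{0} :=
    fun e c => if h : e ∈ PSet θ δ ∧ c ∈ PSet σ δ then (hch e).choose c else ∅ with hWdef
  have hW'P : ∀ e c, W e c ∈ PSet κ lam.ord := by
    intro e c
    rw [hWdef]
    dsimp only
    split
    · rename_i h
      exact ((hch e).choose_spec h.1).1 c h.2
    · exact empty_mem_PSet hκ.pos
  obtain ⟨w, hwP, hwKP⟩ := exists_wstar (θ := θ) hκ hωl hl0 hdl hσl hW'P h3σ hσκ hval
  refine (mem_nabla_Ikl_iff hκ).2 ⟨hBP, w, fun c _ => hwP c, ?_⟩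
  rw [eq_empty_iff_forall_notMem]
  rintro a ⟨haB, haC⟩
  obtain ⟨h0a, hKP⟩ := hwKP a haC
  rcases hcov haB with h | h
  · have hmem : (0 : Ordinal.{0}) ∈ a ∩ Set.Iio θ.ord := by
      refine ⟨h0a, Set.mem_Iio.2 ?_⟩
      simpa using Cardinal.ord_lt_ord.2 (lt_of_lt_of_le two_pos hθ2)
    rw [h.2] at hmem
    exact hmem
  · simp only [mem_iUnion, exists_prop] at h
    obtain ⟨e, heP, haF, he1, he2⟩ := h
    have hmem : a ∈ Cw κ lam.ord σ δ ((hch e).choose) := by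
      refine ⟨haC.1, haC.2.1, ?_⟩
      intro c hcsub hccard
      have hcP : c ∈ PSet σ δ := ⟨fun x hx => (hcsub hx).2,
        lt_of_lt_of_le hccard (mSet_le_lift σ a)⟩
      have hW := hKP e c he1 he2 hcsub hccard
      simp only [hWdef] at hW
      rwa [dif_pos ⟨heP, hcP⟩] at hW
    exact (eq_empty_iff_forall_notMem.1 (((hch e).choose_spec heP).2)) a ⟨haF, hmem⟩

/-- Closure of `N` under small unions. -/
theorem N_sUnion {σ : Cardinal.{0}} {l : Ordinal.{0}} (hκ : κ.IsRegular)
    {Y : Set (Set (Set Ordinal.{0}))} (hY : Y ⊆ nabla κ l σ δ (Ikl κ l))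
    (hcard : #↥Y < Cardinal.lift.{1} κ) : ⋃₀ Y ∈ nabla κ l σ δ (Ikl κ l) := by
  classical
  have hch : ∀ B : Set (Set Ordinal.{0}), ∃ w : Set Ordinal.{0} → Set Ordinal.{0}, B ∈ Y →
      ((∀ c ∈ PSet σ δ, w c ∈ PSet κ l) ∧ B ∩ Cw κ l σ δ w = ∅) := by
    intro B
    by_cases hB : B ∈ Y
    · obtain ⟨-, w, hw⟩ := (mem_nabla_Ikl_iff hκ).1 (hY hB)
      exact ⟨w, fun _ => hw⟩
    · exact ⟨fun _ => ∅, fun h => absurd h hB⟩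
  refine (mem_nabla_Ikl_iff hκ).2 ⟨?_, fun c => ⋃ B ∈ Y, (hch B).choose c, ?_, ?_⟩
  · rintro a ⟨B, hBY, haB⟩
    exact ((mem_nabla_Ikl_iff hκ).1 (hY hBY)).1 haB
  · intro c hc
    exact biUnion_mem_PSet hκ hcard fun B hB => ((hch B).choose_spec hB).1 c hc
  · rw [eq_empty_iff_forall_notMem]
    rintro a ⟨⟨B, hBY, haB⟩, haC⟩
    have hmem : a ∈ Cw κ l σ δ ((hch B).choose) := by
      refine ⟨haC.1, haC.2.1, fun c h1 h2 => subset_trans ?_ (haC.2.2 c h1 h2)⟩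
      intro x hx
      simp only [mem_iUnion, exists_prop]
      exact ⟨B, hBY, hx⟩
    exact (eq_empty_iff_forall_notMem.1 (((hch B).choose_spec hBY).2)) a ⟨haB, hmem⟩

/-- `N` is an ideal and is the smallest `[δ]^{<θ}`-normal ideal. -/
theorem N_subset_of_normal {l : Ordinal.{0}} (hκ : κ.IsRegular) (hωl : Ordinal.omega0 ≤ l)
    (hθ2 : 2 ≤ θ) (hθκ : θ ≤ κ) {J : Set (Set (Set Ordinal.{0}))}
    (hJ : IsNormalIdeal κ l θ δ J) :
    nabla κ l (thetaBar κ θ * 3) δ (Ikl κ l) ⊆ J := by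
  have hl0 : (0 : Ordinal.{0}) < l := lt_of_lt_of_le Ordinal.omega0_pos hωl
  have hnorm : nabla κ l θ δ J ⊆ J := le_of_eq hJ.2.symm
  exact subset_trans (nabla_mono_right hJ.1.nonCofinal_subset)
    (lemmaA hκ hωl hl0 hθ2 hθκ hJ.1 hnorm)

end Main

end Aux

/-- If there exists a `[δ]^{<θ}`-normal ideal on `P_κ(λ)`, then the smallest
`[δ]^{<θ}`-normal ideal on `P_κ(λ)` is `∇^{[δ]^{<θ̄·3}} I_{κ,λ}`. -/
theorem stmt3 (κ lam θ : Cardinal.{0}) (δ : Ordinal.{0})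
    (hκ : κ.IsRegular) (hkl : κ ≤ lam) (hθ2 : 2 ≤ θ) (hθκ : θ ≤ κ)
    (hδ1 : 1 ≤ δ) (hdl : δ ≤ lam.ord)
    (hex : ∃ J, IsNormalIdeal κ lam.ord θ δ J) :
    IsLeastNormalIdeal κ lam.ord θ δ
      (nabla κ lam.ord (thetaBar κ θ * 3) δ (Ikl κ lam.ord)) := by
  classical
  obtain ⟨J0, hJ0⟩ := hex
  have hωl : Ordinal.omega0 ≤ lam.ord := Cardinal.omega0_le_ord.2 (le_trans hκ.1 hkl)
  obtain ⟨h3σ, hσκ, -, -⟩ := thetaBar_facts hκ hθ2 hθκ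
  have hσ0 : (0 : Cardinal.{0}) < thetaBar κ θ * 3 :=
    lt_of_lt_of_le (by norm_num) h3σ
  have hNsub : ∀ C ∈ nabla κ lam.ord (thetaBar κ θ * 3) δ (Ikl κ lam.ord),
      C ⊆ PSet κ lam.ord := fun C hC => nabla_subset_PSet Ikl_subset_PSet hC
  have hNJ : ∀ J, IsNormalIdeal κ lam.ord θ δ J →
      nabla κ lam.ord (thetaBar κ θ * 3) δ (Ikl κ lam.ord) ⊆ J :=
    fun J hJ => N_subset_of_normal hκ hωl hθ2 hθκ hJ
  have hIdeal : IsIdeal κ lam.ord (nabla κ lam.ord (thetaBar κ θ * 3) δ (Ikl κ lam.ord)) := by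
    refine ⟨hNsub, ?_, ?_, ?_, ?_⟩
    · rintro B ⟨F, hF, hcov⟩ C hCB
      exact ⟨F, hF, hCB.trans hcov⟩
    · intro Y hY _ hcard
      exact N_sUnion hκ hY hcard
    · exact subset_nabla Ikl_subset_PSet hσ0
    · intro hPN
      exact hJ0.1.univ_not_mem (hNJ J0 hJ0 hPN)
  have hNormal : IsNormal κ lam.ord θ δ
      (nabla κ lam.ord (thetaBar κ θ * 3) δ (Ikl κ lam.ord)) :=
    Set.Subset.antisymm (subset_nabla hNsub (lt_of_lt_of_le two_pos hθ2))
      (star_lemma hκ hkl hθ2 hθκ hdl)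
  exact ⟨⟨hIdeal, hNormal⟩, hNJ⟩

end PklNormal
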